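/- For the type G_2 with exponents 1 and 5 and dimension 14, and a hyperbolic triple (a,b,c), the sum Σ_{k∈{a,b,c}} [(1 + 2⌊1/k⌋) + (1 + 2⌊5/k⌋)] is strictly less than 14 unless a = 2 and c = 5, i.e., unless (a,b,c) ∈ {(2,4,5),(2,5,5)}, in which case the sum equals 14. -/
import Mathlib


theorem typeG2_inequality (a b c : ℕ) (ha : 0 < a) (hab : a ≤ b) (hbc : b ≤ c)
    (hhyp : (1 : ℚ)/a + 1/b + 1/c < 1) :
    (((1 + 2 * (1 / a)) + (1 + 2 * (5 / a))) + ((1 + 2 * (1 / b)) + (1 + 2 * (5 / b)))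
        + ((1 + 2 * (1 / c)) + (1 + 2 * (5 / c))) < 14 ↔ ¬(a = 2 ∧ c = 5)) ∧
    ((a = 2 ∧ c = 5) →
      (((1 + 2 * (1 / a)) + (1 + 2 * (5 / a))) + ((1 + 2 * (1 / b)) + (1 + 2 * (5 / b)))
        + ((1 + 2 * (1 / c)) + (1 + 2 * (5 / c))) = 14 ∧ (b = 4 ∨ b = 5))) := by
  have hb0 : 0 < b := lt_of_lt_of_le ha hab
  have hc0 : 0 < c := lt_of_lt_of_le hb0 hbc
  have hbq : (0:ℚ) < ((b:ℚ))⁻¹ := by positivity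
  have hcq : (0:ℚ) < ((c:ℚ))⁻¹ := by positivity
  have ha2 : 2 ≤ a := by
    by_contra h
    push_neg at h
    interval_cases a
    norm_num at hhyp
    linarith
  by_cases hA : a = 2
  · subst hA
    by_cases hC : c = 5
    · subst hC
      have hb45 : b = 4 ∨ b = 5 := by
        have hb2 : 2 ≤ b := hab
        have hb5 : b ≤ 5 := hbc
        interval_cases b <;> revert hhyp <;> norm_num
      rcases hb45 with rfl | rfl
      · refine ⟨⟨fun h _ => by omega, fun h => absurd ⟨rfl, rfl⟩ h⟩, fun _ => ⟨by norm_num, Or.inl rfl⟩⟩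
      · refine ⟨⟨fun h _ => by omega, fun h => absurd ⟨rfl, rfl⟩ h⟩, fun _ => ⟨by norm_num, Or.inr rfl⟩⟩
    · have hb3 : 3 ≤ b := by
        by_contra h
        push_neg at h
        interval_cases b
        norm_num at hhyp
        linarith
      have hc6 : 6 ≤ c := by
        by_contra h
        push_neg at h
        have hc4 : c ≤ 4 := by omega
        have hb4 : b ≤ 4 := le_trans hbc hc4
        interval_cases b <;> interval_cases c <;> revert hhyp <;> norm_num
      have h1b : 1 / b = 0 := Nat.div_eq_of_lt (by omega)
      have h5b : 5 / b ≤ 1 := by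
        calc 5 / b ≤ 5 / 3 := Nat.div_le_div_left (by omega) (by omega)
        _ = 1 := rfl
      have h1c : 1 / c = 0 := Nat.div_eq_of_lt (by omega)
      have h5c : 5 / c = 0 := Nat.div_eq_of_lt (by omega)
      refine ⟨⟨fun _ h => hC h.2, fun _ => ?_⟩, fun h => absurd h.2 hC⟩
      rw [h1b, h1c, h5c]
      norm_num
      omega
  · have ha3 : 3 ≤ a := by omega
    have h1a : 1 / a = 0 := Nat.div_eq_of_lt (by omega)
    have h5a : 5 / a ≤ 1 := by
      calc 5 / a ≤ 5 / 3 := Nat.div_le_div_left (by omega) (by omega)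
      _ = 1 := rfl
    have h1b : 1 / b = 0 := Nat.div_eq_of_lt (by omega)
    have h5b : 5 / b ≤ 1 := by
      calc 5 / b ≤ 5 / 3 := Nat.div_le_div_left (by omega) (by omega)
      _ = 1 := rfl
    have h1c : 1 / c = 0 := Nat.div_eq_of_lt (by omega)
    have h5c : 5 / c ≤ 1 := by
      calc 5 / c ≤ 5 / 3 := Nat.div_le_div_left (by omega) (by omega)
      _ = 1 := rfl
    refine ⟨⟨fun _ h => hA h.1, fun _ => ?_⟩, fun h => absurd h.1 hA⟩
    rw [h1a, h1b, h1c]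
    omega
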